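/- arXiv:2004.09051 — 2 statements merged into one kernel-verified Lean document; each statement's English description precedes it below -/
import Mathlib

section
/- For every natural number k, the sum over i from 0 to k-1 of (2^k / 2^(i+1)) · 2^i equals k · 2^(k-1). Consequently, for n = 2^k, the total number of comparisons T(n) performed when inserting a sequence of n values into an initially empty black-white array satisfies T(n) = (n/2) · log₂ n ≤ n · log₂ n, i.e., the insertion of a sequence of n = 2^k values takes O(n log n) time. -/
/-- Insert Time: inserting `n = 2^k` values into a black-white array performs
`T(n) = Σ_{i=0}^{k-1} (2^k / 2^(i+1)) · 2^i = k · 2^(k-1) = (n/2) · log₂ n`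
comparisons, which is at most `n · log₂ n`. -/
theorem bwa_insert_time (k : ℕ) :
    ∑ i ∈ Finset.range k, (2 ^ k / 2 ^ (i + 1)) * 2 ^ i = k * 2 ^ (k - 1) ∧
    k * 2 ^ (k - 1) ≤ 2 ^ k * k := by
  constructor
  · have h : ∀ i ∈ Finset.range k, (2 ^ k / 2 ^ (i + 1)) * 2 ^ i = 2 ^ (k - 1) := by
      intro i hi
      rw [Finset.mem_range] at hi
      rw [Nat.pow_div (by omega) (by norm_num), ← pow_add]
      congr 1
      omega
    rw [Finset.sum_congr rfl h, Finset.sum_const, Finset.card_range, smul_eq_mul]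
  · rw [mul_comm]
    exact Nat.mul_le_mul_right _ (Nat.pow_le_pow_right (by norm_num) (Nat.sub_le _ _))
end

section
/- For every natural number m ≥ 1, the real-number inequality Σ_{i=1}^{m-1} (1/2^i) · (Σ_{j=1}^{i} (m - j)) + (1/2^(m-1)) · (Σ_{j=1}^{m-1} (m - j)) ≤ 2(m - 1) holds. (This is the Search Time (Hit) theorem: for a black-white array with up to n = 2^m values whose stored values are uniformly distributed, the expected number of comparisons of a successful search is at most 2(m-1) = O(log n).) -/
lemma bwa_inner (x : ℝ) (i : ℕ) :
    ∑ j ∈ Finset.Icc 1 i, (x - (j : ℝ)) = i * x - i * (i + 1) / 2 := by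
  induction i with
  | zero => simp
  | succ n ih =>
      rw [Finset.sum_Icc_succ_top (by omega : 1 ≤ n + 1), ih]
      push_cast; ring

lemma bwa_sumA (M : ℕ) :
    ∑ i ∈ Finset.Icc 1 M, ((i : ℝ) / 2 ^ i) = 2 - ((M : ℝ) + 2) / 2 ^ M := by
  induction M with
  | zero => norm_num
  | succ n ih =>
      rw [Finset.sum_Icc_succ_top (by omega : 1 ≤ n + 1), ih]
      have h : (2 : ℝ) ^ n ≠ 0 := by positivity
      push_cast; field_simp; ring

lemma bwa_sumB (M : ℕ) :
    ∑ i ∈ Finset.Icc 1 M, ((i : ℝ) ^ 2 / 2 ^ i) =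
      6 - ((M : ℝ) ^ 2 + 4 * M + 6) / 2 ^ M := by
  induction M with
  | zero => norm_num
  | succ n ih =>
      rw [Finset.sum_Icc_succ_top (by omega : 1 ≤ n + 1), ih]
      have h : (2 : ℝ) ^ n ≠ 0 := by positivity
      push_cast; field_simp; ring

/-- Search Time (Hit): the expected number of comparisons of a successful
search in a black-white array with up to `n = 2^m` uniformly distributed
values,
`Σ_{i=1}^{m-1} (1/2^i) Σ_{j=1}^{i} (m-j) + (1/2^(m-1)) Σ_{j=1}^{m-1} (m-j)`,
is at most `2(m - 1)`. -/
theorem bwa_hit_search_time (m : ℕ) (hm : 1 ≤ m) :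
    (∑ i ∈ Finset.Icc 1 (m - 1),
        (1 / 2 ^ i : ℝ) * ∑ j ∈ Finset.Icc 1 i, ((m : ℝ) - (j : ℝ))) +
      (1 / 2 ^ (m - 1) : ℝ) * ∑ j ∈ Finset.Icc 1 (m - 1), ((m : ℝ) - (j : ℝ)) ≤
      2 * ((m : ℝ) - 1) := by
  obtain ⟨M, rfl⟩ : ∃ M, m = M + 1 := ⟨m - 1, by omega⟩
  simp only [Nat.add_sub_cancel]
  set x : ℝ := (M : ℝ) + 1 with hx
  have hcast : ((M + 1 : ℕ) : ℝ) = x := by push_cast [hx]; ring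
  have hsum : ∑ i ∈ Finset.Icc 1 M,
      (1 / 2 ^ i : ℝ) * ∑ j ∈ Finset.Icc 1 i, (((M + 1 : ℕ) : ℝ) - (j : ℝ)) =
      x * ∑ i ∈ Finset.Icc 1 M, ((i : ℝ) / 2 ^ i)
        - (∑ i ∈ Finset.Icc 1 M, ((i : ℝ) ^ 2 / 2 ^ i)
           + ∑ i ∈ Finset.Icc 1 M, ((i : ℝ) / 2 ^ i)) / 2 := by
    rw [show x * ∑ i ∈ Finset.Icc 1 M, ((i : ℝ) / 2 ^ i)
        - (∑ i ∈ Finset.Icc 1 M, ((i : ℝ) ^ 2 / 2 ^ i)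
           + ∑ i ∈ Finset.Icc 1 M, ((i : ℝ) / 2 ^ i)) / 2
      = ∑ i ∈ Finset.Icc 1 M,
          (x * ((i : ℝ) / 2 ^ i) - ((i : ℝ) ^ 2 / 2 ^ i + (i : ℝ) / 2 ^ i) / 2)
      by rw [Finset.sum_sub_distrib, ← Finset.mul_sum, ← Finset.sum_div,
        Finset.sum_add_distrib]]
    refine Finset.sum_congr rfl fun i _ => ?_
    rw [hcast, bwa_inner]
    have h : (2 : ℝ) ^ i ≠ 0 := by positivity
    field_simp
  rw [hsum, bwa_sumA, bwa_sumB, hcast, bwa_inner]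
  have hp : (1 : ℝ) ≤ 2 ^ M := one_le_pow₀ (by norm_num)
  have hp0 : (2 : ℝ) ^ M ≠ 0 := by positivity
  rw [hx]
  have hM : (0 : ℝ) ≤ (M : ℝ) := Nat.cast_nonneg M
  have hpos : (0 : ℝ) < 2 ^ M := by positivity
  rw [← sub_nonneg]
  have heq : 2 * ((M : ℝ) + 1 - 1) -
      (((M : ℝ) + 1) * (2 - ((M : ℝ) + 2) / 2 ^ M) -
        (6 - ((M : ℝ) ^ 2 + 4 * (M : ℝ) + 6) / 2 ^ M +
          (2 - ((M : ℝ) + 2) / 2 ^ M)) / 2 +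
        1 / 2 ^ M * ((M : ℝ) * ((M : ℝ) + 1) - (M : ℝ) * ((M : ℝ) + 1) / 2))
      = 2 - 2 / 2 ^ M := by field_simp; ring
  rw [heq, sub_nonneg, div_le_iff₀ hpos]
  nlinarith [hp]
end
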